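/- With X normal Hausdorff and Y ⊆ C_b(X) a Banach space with ‖·‖ ≥ ‖·‖_∞ satisfying (H): for every bounded below lower semicontinuous f : X → ℝ ∪ {+∞} with nonempty domain, inf_{x∈X} f(x) = min of F(f) over the weak* closure of Δ_Y(X) = min of F(f) over the weak*-closed convex hull of Δ_Y(X), and these minima are attained. -/

import Mathlib

open BoundedContinuousFunction

/-- The transform `F(f)(Q) = sup_{φ ∈ Y} (Q(φ) − f^×(φ))`. -/
noncomputable def FTransform {X : Type*} [TopologicalSpace X]
    {Y : Type*} [NormedAddCommGroup Y] [NormedSpace ℝ Y]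
    (j : Y →ₗ[ℝ] (X →ᵇ ℝ)) (f : X → EReal) (Q : WeakDual ℝ Y) : EReal :=
  ⨆ φ : Y, ((Q φ : EReal) - ⨆ x : X, ((j φ x : EReal) - f x))

/-- Auxiliary: the conjugate `f^×`. -/
noncomputable def conjAux {X : Type*} [TopologicalSpace X]
    {Y : Type*} [NormedAddCommGroup Y] [NormedSpace ℝ Y]
    (j : Y →ₗ[ℝ] (X →ᵇ ℝ)) (f : X → EReal) (φ : Y) : EReal :=
  ⨆ x : X, ((j φ x : EReal) - f x)

theorem FTransform_eq {X : Type*} [TopologicalSpace X]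
    {Y : Type*} [NormedAddCommGroup Y] [NormedSpace ℝ Y]
    (j : Y →ₗ[ℝ] (X →ᵇ ℝ)) (f : X → EReal) (Q : WeakDual ℝ Y) :
    FTransform j f Q = ⨆ φ : Y, ((Q φ : EReal) - conjAux j f φ) := rfl

theorem conjAux_eq {X : Type*} [TopologicalSpace X]
    {Y : Type*} [NormedAddCommGroup Y] [NormedSpace ℝ Y]
    (j : Y →ₗ[ℝ] (X →ᵇ ℝ)) (f : X → EReal) (φ : Y) :
    conjAux j f φ = ⨆ x : X, ((j φ x : EReal) - f x) := rfl

theorem FTransform_preserves_inf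
    {X : Type*} [TopologicalSpace X] [T2Space X] [NormalSpace X]
    (Y : Type*) [NormedAddCommGroup Y] [NormedSpace ℝ Y] [CompleteSpace Y]
    (j : Y →ₗ[ℝ] (X →ᵇ ℝ)) (hj : Function.Injective j)
    (hnorm : ∀ φ : Y, ‖j φ‖ ≤ ‖φ‖)
    (hH : ∀ x : X, ∀ U : Set X, IsOpen U → x ∈ U →
      ∃ σ : Y, (∀ y, j σ y ∈ Set.Icc (0 : ℝ) 1) ∧ j σ x = 1 ∧ ∀ y ∉ U, j σ y = 0)
    (f : X → EReal) (hf : LowerSemicontinuous f)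
    (hbdd : ∃ m : ℝ, ∀ x, (m : EReal) ≤ f x) (hdom : ∃ x, f x ≠ ⊤) :
    ∃ Δ : X → WeakDual ℝ Y, (∀ (x : X) (φ : Y), Δ x φ = j φ x) ∧
      -- minimum attained on the weak* closure of Δ(X), with value inf f
      (∃ Q₁ ∈ closure (Set.range Δ), FTransform j f Q₁ = (⨅ x : X, f x) ∧
        ∀ Q ∈ closure (Set.range Δ), FTransform j f Q₁ ≤ FTransform j f Q) ∧
      -- minimum attained on the weak*-closed convex hull of Δ(X), with value inf f
      (∃ Q₂ ∈ closure (convexHull ℝ (Set.range Δ)), FTransform j f Q₂ = (⨅ x : X, f x) ∧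
        ∀ Q ∈ closure (convexHull ℝ (Set.range Δ)), FTransform j f Q₂ ≤ FTransform j f Q) := by
  classical
  obtain ⟨m, hm⟩ := hbdd
  obtain ⟨x₀, hx₀⟩ := hdom
  -- the evaluation maps
  set Δ : X → WeakDual ℝ Y := fun x =>
    LinearMap.mkContinuous
      { toFun := fun φ => j φ x
        map_add' := fun φ ψ => by simp
        map_smul' := fun c φ => by simp }
      1 (fun φ => by
        simpa using ((j φ).norm_coe_le_norm x).trans (hnorm φ)) with hΔdef
  have hΔ : ∀ (x : X) (φ : Y), Δ x φ = j φ x := fun _ _ => rfl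
  -- the infimum
  set I : EReal := ⨅ x, f x with hIdef
  have hmI : (m : EReal) ≤ I := le_iInf hm
  have hItop : I ≠ ⊤ := by
    intro h
    have h1 : I ≤ f x₀ := iInf_le f x₀
    rw [h] at h1
    exact hx₀ (top_le_iff.1 h1)
  have hIbot : I ≠ ⊥ := by
    intro h
    rw [h, le_bot_iff] at hmI
    exact EReal.coe_ne_bot m hmI
  set r : ℝ := I.toReal with hrdef
  have hrI : (r : EReal) = I := EReal.coe_toReal hItop hIbot
  -- the conjugate
  set g : Y → EReal := conjAux j f with hgdef
  have hgle : ∀ (φ : Y) (x : X), (j φ x : EReal) - f x ≤ g φ := by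
    intro φ x
    rw [hgdef, conjAux_eq]
    exact le_iSup (fun x => ((j φ x : EReal) - f x)) x
  have hx₀bot : f x₀ ≠ ⊥ := ((EReal.bot_lt_coe m).trans_le (hm x₀)).ne'
  have hgtop : ∀ φ, g φ ≠ ⊤ := by
    intro φ
    have hb : g φ ≤ ((‖φ‖ - m : ℝ) : EReal) := by
      rw [hgdef, conjAux_eq]
      refine iSup_le fun x => ?_
      have h1 : (j φ x : EReal) ≤ ((‖φ‖ : ℝ) : EReal) := by
        exact_mod_cast le_trans (le_abs_self _) (((j φ).norm_coe_le_norm x).trans (hnorm φ))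
      calc (j φ x : EReal) - f x ≤ ((‖φ‖ : ℝ) : EReal) - (m : EReal) :=
            EReal.sub_le_sub h1 (hm x)
        _ = ((‖φ‖ - m : ℝ) : EReal) := by norm_cast
    exact (hb.trans_lt (EReal.coe_lt_top _)).ne
  have hgbot : ∀ φ, g φ ≠ ⊥ := by
    intro φ
    refine ((lt_of_lt_of_le ?_ (hgle φ x₀))).ne'
    rw [(EReal.coe_toReal hx₀ hx₀bot).symm, ← EReal.coe_sub]
    exact EReal.bot_lt_coe _
  -- lower bound: F(f)(Q) ≥ I for every Q
  have hlow : ∀ Q : WeakDual ℝ Y, I ≤ FTransform j f Q := by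
    intro Q
    have hg0 : g 0 ≤ -I := by
      rw [hgdef, conjAux_eq]
      refine iSup_le fun x => ?_
      have h0 : j (0 : Y) x = 0 := by simp
      rw [h0]
      show ((0 : ℝ) : EReal) - f x ≤ -I
      rw [EReal.coe_zero, zero_sub]
      exact EReal.neg_le_neg_iff.2 (iInf_le f x)
    have hQ0 : (Q (0 : Y) : EReal) = 0 := by rw [map_zero]; rfl
    have h1 : I ≤ (Q (0 : Y) : EReal) - g 0 := by
      rw [hQ0]
      calc I = (0 : EReal) - (-I) := by rw [zero_sub, neg_neg]
        _ ≤ (0 : EReal) - g 0 := EReal.sub_le_sub le_rfl hg0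
    rw [FTransform_eq j f Q, ← hgdef]
    exact le_trans h1 (le_iSup (fun φ => ((Q φ : EReal) - g φ)) 0)
  -- minimizing sequence
  have hseq : ∀ n : ℕ, ∃ x, f x < ((r + 1 / (n + 1) : ℝ) : EReal) := by
    intro n
    have h1 : I < ((r + 1 / (n + 1) : ℝ) : EReal) := by
      rw [← hrI]
      exact_mod_cast (lt_add_iff_pos_right r).2 (by positivity)
    exact iInf_lt_iff.1 h1
  choose xs hxs using hseq
  set u : ℕ → WeakDual ℝ Y := fun n => Δ (xs n) with hudef
  -- Banach–Alaoglu
  set K : Set (WeakDual ℝ Y) :=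
    WeakDual.toStrongDual ⁻¹' Metric.closedBall (0 : StrongDual ℝ Y) 1 with hKdef
  have hKc : IsCompact K := WeakDual.isCompact_closedBall (0 : StrongDual ℝ Y) 1
  have huK : ∀ n, u n ∈ K := by
    intro n
    simp only [hKdef, Set.mem_preimage, Metric.mem_closedBall, dist_zero_right]
    exact LinearMap.mkContinuous_norm_le _ zero_le_one
      (fun φ => by simpa using ((j φ).norm_coe_le_norm (xs n)).trans (hnorm φ))
  obtain ⟨Q₁, hQ₁K, hclus⟩ := hKc.exists_mapClusterPt (u := u) (f := Filter.atTop)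
    (Filter.le_principal_iff.2 (Filter.mem_map.mpr
      (Filter.Eventually.of_forall huK : ∀ᶠ n in Filter.atTop, u n ∈ K)))
  have hQ₁cl : Q₁ ∈ closure (Set.range Δ) := by
    have h1 : Filter.map u Filter.atTop ≤ Filter.principal (Set.range Δ) :=
      Filter.le_principal_iff.2 (Filter.mem_map.mpr
        (Filter.Eventually.of_forall (fun n => ⟨xs n, rfl⟩) :
          ∀ᶠ n in Filter.atTop, u n ∈ Set.range Δ))
    exact mem_closure_iff_clusterPt.2 (hclus.clusterPt.mono h1)
  -- key upper estimate
  have hkey : ∀ φ : Y, (Q₁ φ : EReal) - g φ ≤ I := by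
    intro φ
    set c : ℝ := (g φ).toReal with hcdef
    have hgc : g φ = (c : EReal) := (EReal.coe_toReal (hgtop φ) (hgbot φ)).symm
    have hb : ∀ n : ℕ, j φ (xs n) ≤ c + (r + 1 / (n + 1)) := by
      intro n
      have h1 : (j φ (xs n) : EReal) - f (xs n) ≤ (c : EReal) := hgc ▸ hgle φ (xs n)

      have hfxtop : f (xs n) ≠ ⊤ := ((hxs n).trans (EReal.coe_lt_top _)).ne
      have hfxbot : f (xs n) ≠ ⊥ := ((EReal.bot_lt_coe m).trans_le (hm _)).ne'
      set a : ℝ := (f (xs n)).toReal with hadef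
      have hfa : f (xs n) = (a : EReal) := (EReal.coe_toReal hfxtop hfxbot).symm
      have h2 : j φ (xs n) - a ≤ c := by
        rw [hfa, ← EReal.coe_sub] at h1
        exact_mod_cast h1
      have h3 : a ≤ r + 1 / (n + 1) := by
        have h4 := (hxs n).le
        rw [hfa] at h4
        exact_mod_cast h4
      linarith
    have hclusφ : MapClusterPt (Q₁ φ) Filter.atTop (fun n => u n φ) :=
      hclus.continuousAt_comp (WeakDual.eval_continuous φ).continuousAt
    have hQle : Q₁ φ ≤ c + r := by
      by_contra hcon
      push_neg at hcon
      set ε : ℝ := (Q₁ φ - (c + r)) / 2 with hεdef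
      have hε : 0 < ε := by simp only [hεdef]; linarith
      obtain ⟨N, hN⟩ := exists_nat_gt (1 / ε)
      have hev : ∀ᶠ n : ℕ in Filter.atTop, (fun k => u k φ) n ∈ Set.Iic (c + r + ε) := by
        filter_upwards [Filter.eventually_ge_atTop N] with n hn
        have hn1 : (1 : ℝ) / ε ≤ (n : ℝ) + 1 := by
          have : (N : ℝ) ≤ (n : ℝ) := by exact_mod_cast hn
          linarith [hN.le]
        have h5 : (1 : ℝ) / ((n : ℝ) + 1) ≤ ε := by
          rw [div_le_iff₀ (by positivity)]
          have h6 : (1 : ℝ) ≤ ε * ((n : ℝ) + 1) := by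
            have := (div_le_iff₀ hε).1 hn1
            linarith
          linarith
        have h7 : u n φ = j φ (xs n) := rfl
        simp only [Set.mem_Iic, h7]
        linarith [hb n]
      have hmem : Q₁ φ ∈ closure (Set.Iic (c + r + ε)) :=
        mem_closure_iff_clusterPt.2
          (hclusφ.clusterPt.mono (Filter.le_principal_iff.2 hev))
      rw [IsClosed.closure_eq isClosed_Iic] at hmem
      rw [Set.mem_Iic] at hmem
      simp only [hεdef] at hmem
      linarith
    rw [hgc, ← hrI]
    calc (Q₁ φ : EReal) - (c : EReal) = ((Q₁ φ - c : ℝ) : EReal) := by norm_cast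
      _ ≤ (r : EReal) := by exact_mod_cast (by linarith : Q₁ φ - c ≤ r)
  have hupper : FTransform j f Q₁ ≤ I := by
    rw [FTransform_eq j f Q₁, ← hgdef]
    exact iSup_le hkey
  have hQ₁eq : FTransform j f Q₁ = I := le_antisymm hupper (hlow Q₁)
  refine ⟨Δ, hΔ, ⟨Q₁, hQ₁cl, hQ₁eq, fun Q _ => hQ₁eq.le.trans (hlow Q)⟩,
    ⟨Q₁, closure_mono (subset_convexHull ℝ _) hQ₁cl, hQ₁eq,
      fun Q _ => hQ₁eq.le.trans (hlow Q)⟩⟩
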